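/- If a d×d complex density matrix ρ (d ≥ 2) has real part equal to 𝟙/d, i.e., ρ = (1/d)(𝟙 + I) where I = (d/2)(ρ − ρᵀ), then S_I² ≤ (2/d)·⌊d/2⌋; in particular S_I ≤ 1 for even d and S_I² ≤ (d−1)/d for odd d. -/

import Mathlib

open Matrix
open scoped ComplexOrder

noncomputable section

/-- A density matrix: positive semidefinite with unit trace. -/
def IsDensityMatrix {d : ℕ} (ρ : Matrix (Fin d) (Fin d) ℂ) : Prop :=
  ρ.PosSemidef ∧ ρ.trace = 1

/-- The real part `R = (d/2)(ρ + ρᵀ)`. -/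
def Rpart (d : ℕ) (ρ : Matrix (Fin d) (Fin d) ℂ) : Matrix (Fin d) (Fin d) ℂ :=
  ((d : ℂ) / 2) • (ρ + ρ.transpose)

/-- The imaginary part `I = (d/2)(ρ − ρᵀ)`. -/
def Ipart (d : ℕ) (ρ : Matrix (Fin d) (Fin d) ℂ) : Matrix (Fin d) (Fin d) ℂ :=
  ((d : ℂ) / 2) • (ρ - ρ.transpose)

/-- `S_R = √(Tr(R²)/d − 1)`. -/
def SR (d : ℕ) (ρ : Matrix (Fin d) (Fin d) ℂ) : ℝ :=
  Real.sqrt ((Rpart d ρ * Rpart d ρ).trace.re / d - 1)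

/-- `S_I = √(Tr(I²)/d)`. -/
def SI (d : ℕ) (ρ : Matrix (Fin d) (Fin d) ℂ) : ℝ :=
  Real.sqrt ((Ipart d ρ * Ipart d ρ).trace.re / d)

section Aux

variable {d : ℕ} {A : Matrix (Fin d) (Fin d) ℂ}

lemma aux_trace_eq_sum (hA : A.IsHermitian) :
    A.trace = ∑ i, (hA.eigenvalues i : ℂ) := by
  conv_lhs => rw [hA.spectral_theorem, Unitary.conjStarAlgAut_apply]
  rw [trace_mul_cycle, Unitary.coe_star_mul_self, one_mul, trace_diagonal]
  simp

lemma aux_trace_sq_eq_sum (hA : A.IsHermitian) :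
    (A * A).trace = ∑ i, ((hA.eigenvalues i : ℂ))^2 := by
  set U : Matrix (Fin d) (Fin d) ℂ := (hA.eigenvectorUnitary : Matrix (Fin d) (Fin d) ℂ) with hUdef
  set D : Matrix (Fin d) (Fin d) ℂ := diagonal (RCLike.ofReal ∘ hA.eigenvalues) with hDdef
  have hU : star U * U = 1 := Unitary.coe_star_mul_self _
  have key : U * D * star U * (U * D * star U) = U * (D * D) * star U := by
    simp only [mul_assoc]
    rw [← mul_assoc (star U) U, hU, one_mul]
  conv_lhs => rw [hA.spectral_theorem, Unitary.conjStarAlgAut_apply, ← hUdef, ← hDdef, key]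
  rw [trace_mul_cycle, ← mul_assoc, hU, one_mul, hDdef, diagonal_mul_diagonal, trace_diagonal]
  simp [sq]

end Aux

lemma aux_sum_sq_le {d : ℕ} (f : Fin d → ℝ) (hsum : ∑ i, f i = 0)
    (hb : ∀ i, |f i| ≤ 1) : ∑ i, (f i)^2 ≤ 2 * ((d / 2 : ℕ) : ℝ) := by
  classical
  set P : Finset (Fin d) := Finset.univ.filter (fun i => 0 < f i) with hP
  set N : Finset (Fin d) := Finset.univ.filter (fun i => f i < 0) with hN
  set sp : ℝ := ∑ i, max (f i) 0 with hsp
  set sn : ℝ := ∑ i, max (-f i) 0 with hsn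
  have habs : ∀ x : ℝ, |x| = max x 0 + max (-x) 0 := by
    intro x
    rcases le_total x 0 with h | h
    · rw [abs_of_nonpos h, max_eq_right h, max_eq_left (by linarith), zero_add]
    · rw [abs_of_nonneg h, max_eq_left h, max_eq_right (by linarith), add_zero]
  have hdiff : sp - sn = 0 := by
    have hx : ∀ x : ℝ, max x 0 - max (-x) 0 = x := by
      intro x
      rcases le_total x 0 with h | h
      · rw [max_eq_right h, max_eq_left (by linarith)]; ring
      · rw [max_eq_left h, max_eq_right (by linarith)]; ring
    calc sp - sn = ∑ i, (max (f i) 0 - max (-f i) 0) := by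
          rw [hsp, hsn, Finset.sum_sub_distrib]
    _ = ∑ i, f i := Finset.sum_congr rfl fun i _ => hx (f i)
    _ = 0 := hsum
  have hsum_abs : ∑ i, |f i| = sp + sn := by
    rw [hsp, hsn, ← Finset.sum_add_distrib]
    exact Finset.sum_congr rfl fun i _ => habs (f i)
  have hsq : ∑ i, (f i)^2 ≤ ∑ i, |f i| := by
    apply Finset.sum_le_sum
    intro i _
    calc (f i)^2 = |f i| * |f i| := by rw [← sq_abs]; ring
    _ ≤ 1 * |f i| := by
        apply mul_le_mul_of_nonneg_right (hb i) (abs_nonneg _)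
    _ = |f i| := one_mul _
  have hspP : sp ≤ (P.card : ℝ) := by
    rw [hsp]
    have : ∑ i, max (f i) 0 = ∑ i ∈ P, max (f i) 0 := by
      rw [hP, Finset.sum_filter_of_ne]
      intro x _ hx
      rcases lt_or_ge 0 (f x) with h | h
      · exact h
      · exact absurd (max_eq_right h) hx
    rw [this]
    calc ∑ i ∈ P, max (f i) 0 ≤ ∑ i ∈ P, 1 := by
          apply Finset.sum_le_sum
          intro i _
          exact max_le ((abs_le.mp (hb i)).2) zero_le_one
    _ = (P.card : ℝ) := by simp
  have hsnN : sn ≤ (N.card : ℝ) := by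
    rw [hsn]
    have : ∑ i, max (-f i) 0 = ∑ i ∈ N, max (-f i) 0 := by
      rw [hN, Finset.sum_filter_of_ne]
      intro x _ hx
      rcases lt_or_ge (f x) 0 with h | h
      · exact h
      · exact absurd (max_eq_right (by linarith)) hx
    rw [this]
    calc ∑ i ∈ N, max (-f i) 0 ≤ ∑ i ∈ N, 1 := by
          apply Finset.sum_le_sum
          intro i _
          exact max_le (by linarith [(abs_le.mp (hb i)).1]) zero_le_one
    _ = (N.card : ℝ) := by simp
  have hcard : P.card + N.card ≤ d := by
    have hdisj : Disjoint P N := by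
      rw [Finset.disjoint_left]
      intro a ha hb'
      rw [hP, Finset.mem_filter] at ha
      rw [hN, Finset.mem_filter] at hb'
      linarith [ha.2, hb'.2]
    calc P.card + N.card = (P ∪ N).card := (Finset.card_union_of_disjoint hdisj).symm
    _ ≤ (Finset.univ : Finset (Fin d)).card := Finset.card_le_card (Finset.subset_univ _)
    _ = d := by simp
  have hmin : min P.card N.card ≤ d / 2 := by
    rw [Nat.le_div_iff_mul_le (by norm_num : 0 < 2)]
    rcases le_total P.card N.card with h | h
    · rw [min_eq_left h]; omega
    · rw [min_eq_right h]; omega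
  calc ∑ i, (f i)^2 ≤ sp + sn := hsum_abs ▸ hsq
  _ = 2 * min sp sn := by rcases le_total sp sn with h | h <;>
      [rw [min_eq_left h]; rw [min_eq_right h]] <;> linarith
  _ ≤ 2 * ((min P.card N.card : ℕ) : ℝ) := by
      have : min sp sn ≤ ((min P.card N.card : ℕ) : ℝ) := by
        rcases le_total (P.card : ℕ) N.card with h | h
        · rw [min_eq_left h]; exact le_trans (min_le_left _ _) hspP
        · rw [min_eq_right h]; exact le_trans (min_le_right _ _) hsnN
      linarith
  _ ≤ 2 * ((d / 2 : ℕ) : ℝ) := by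
      have := hmin
      have : ((min P.card N.card : ℕ) : ℝ) ≤ ((d / 2 : ℕ) : ℝ) := Nat.cast_le.mpr hmin
      linarith

/-- If a `d×d` density matrix (`d ≥ 2`) has real part `𝟙/d`, i.e.
`ρ = (1/d)(𝟙 + I)`, then `S_I² ≤ (2/d)·⌊d/2⌋`; in particular `S_I ≤ 1` for even `d`
and `S_I² ≤ (d−1)/d` for odd `d`. -/
theorem imaginary_axis_bound (d : ℕ) (hd : 2 ≤ d) (ρ : Matrix (Fin d) (Fin d) ℂ)
    (hρ : IsDensityMatrix ρ)
    (hreal : ρ = ((d : ℂ))⁻¹ • (1 + Ipart d ρ)) :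
    SI d ρ ^ 2 ≤ (2 / (d : ℝ)) * ((d / 2 : ℕ) : ℝ) ∧
    (Even d → SI d ρ ≤ 1) ∧
    (Odd d → SI d ρ ^ 2 ≤ ((d : ℝ) - 1) / d) := by
  have hd0 : (d : ℂ) ≠ 0 := Nat.cast_ne_zero.mpr (by omega)
  set I : Matrix (Fin d) (Fin d) ℂ := Ipart d ρ with hIdef
  have h1 : (d : ℂ) • ρ = 1 + I := by
    rw [hreal, smul_smul, mul_inv_cancel₀ hd0, one_smul]
  have hij : ∀ i j, star (ρ j i) = ρ i j := fun i j => congrFun (congrFun hρ.1.1 i) j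
  have hIH : I.IsHermitian := by
    ext i j
    simp only [hIdef, Ipart, conjTranspose_apply, Matrix.smul_apply, Matrix.sub_apply, transpose_apply,
      star_smul, star_sub, hij, smul_eq_mul]
    have : star ((d : ℂ) / 2) = (d : ℂ) / 2 := by
      simp [Complex.star_def, map_div₀]
    rw [star_mul', this, star_sub, hij, hij]
  have hIt : Iᵀ = -I := by
    ext i j
    simp [hIdef, Ipart]
    ring
  have hA : (1 + I).PosSemidef := by
    rw [← h1]
    refine Matrix.PosSemidef.of_dotProduct_mulVec_nonneg ?_ ?_
    · rw [Matrix.IsHermitian, conjTranspose_smul, hρ.1.1]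
      congr 1
      simp [Complex.star_def]
    · intro x
      have := hρ.1.dotProduct_mulVec_nonneg x
      rw [smul_mulVec, dotProduct_smul]
      have hdnn : (0:ℂ) ≤ (d:ℂ) := by
        rw [Complex.le_def]; simp [Nat.cast_nonneg]
      calc (0:ℂ) = (d:ℂ) • (0:ℂ) := by simp
      _ ≤ (d:ℂ) • (star x ⬝ᵥ ρ *ᵥ x) := by
          rw [smul_eq_mul, smul_eq_mul]
          exact mul_le_mul_of_nonneg_left this hdnn
  have hB : (1 - I).PosSemidef := by
    have h2 := hA.transpose
    rw [transpose_add, transpose_one, hIt, ← sub_eq_add_neg] at h2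
    exact h2
  have htr : I.trace = 0 := by
    simp [hIdef, Ipart, trace_smul, trace_sub, trace_transpose]
  -- eigenvalues
  have hsum : ∑ i, hIH.eigenvalues i = 0 := by
    have h2 : ((∑ i, hIH.eigenvalues i : ℝ) : ℂ) = 0 := by
      push_cast
      rw [← aux_trace_eq_sum hIH, htr]
    exact_mod_cast h2
  have hbound : ∀ i, |hIH.eigenvalues i| ≤ 1 := by
    intro i
    set v : Fin d → ℂ := ⇑(hIH.eigenvectorBasis i) with hvdef
    have hv : I *ᵥ v = hIH.eigenvalues i • v := hIH.mulVec_eigenvectorBasis i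
    have hnorm : star v ⬝ᵥ v = 1 := by
      have h3 := orthonormal_iff_ite.mp hIH.eigenvectorBasis.orthonormal i i
      rw [EuclideanSpace.inner_eq_star_dotProduct] at h3
      rw [dotProduct_comm]
      simpa using h3
    have hq1 : (0:ℂ) ≤ 1 + (hIH.eigenvalues i : ℂ) := by
      have := hA.dotProduct_mulVec_nonneg v
      rwa [add_mulVec, one_mulVec, hv, dotProduct_add, hnorm, dotProduct_smul,
        hnorm, Complex.real_smul, mul_one] at this
    have hq2 : (0:ℂ) ≤ 1 - (hIH.eigenvalues i : ℂ) := by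
      have := hB.dotProduct_mulVec_nonneg v
      rwa [sub_mulVec, one_mulVec, hv, dotProduct_sub, hnorm, dotProduct_smul,
        hnorm, Complex.real_smul, mul_one] at this
    rw [Complex.le_def] at hq1 hq2
    simp only [Complex.add_re, Complex.sub_re, Complex.one_re, Complex.ofReal_re,
      Complex.zero_re] at hq1 hq2
    exact abs_le.mpr ⟨by linarith [hq1.1], by linarith [hq2.1]⟩
  have htr2 : (I * I).trace.re = ∑ i, (hIH.eigenvalues i)^2 := by
    have h4 : (I * I).trace = ((∑ i, (hIH.eigenvalues i)^2 : ℝ) : ℂ) := by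
      rw [aux_trace_sq_eq_sum hIH]
      push_cast
      rfl
    rw [h4, Complex.ofReal_re]
  have key := aux_sum_sq_le hIH.eigenvalues hsum hbound
  have hdpos : (0:ℝ) < d := by exact_mod_cast (by omega : 0 < d)
  have hSI2 : SI d ρ ^ 2 = (∑ i, hIH.eigenvalues i ^ 2) / d := by
    rw [SI, ← hIdef, htr2]
    exact Real.sq_sqrt (by positivity)
  have main1 : SI d ρ ^ 2 ≤ (2 / (d : ℝ)) * ((d / 2 : ℕ) : ℝ) := by
    rw [hSI2, show (2 / (d:ℝ)) * ((d / 2 : ℕ) : ℝ) = (2 * ((d / 2 : ℕ) : ℝ)) / d by ring]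
    gcongr
  refine ⟨main1, fun heven => ?_, fun hodd => ?_⟩
  · have h2 : (2 / (d:ℝ)) * ((d / 2 : ℕ) : ℝ) = 1 := by
      obtain ⟨k, hk⟩ := heven
      have hk1 : 1 ≤ k := by omega
      subst hk
      rw [show (k + k) / 2 = k from by omega]
      have hkk : ((k + k : ℕ) : ℝ) = 2 * (k : ℝ) := by push_cast; ring
      rw [hkk]
      have hkne : (k:ℝ) ≠ 0 := Nat.cast_ne_zero.mpr (by omega)
      field_simp
    have h3 := main1
    rw [h2] at h3
    nlinarith [Real.sqrt_nonneg ((Ipart d ρ * Ipart d ρ).trace.re / d), h3,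
      sq_nonneg (SI d ρ - 1), sq_nonneg (SI d ρ + 1)]
  · obtain ⟨k, hk⟩ := hodd
    have h2 : (2 / (d:ℝ)) * ((d / 2 : ℕ) : ℝ) = ((d:ℝ) - 1) / d := by
      subst hk
      rw [show (2 * k + 1) / 2 = k from by omega]
      have : ((2 * k + 1 : ℕ) : ℝ) = 2 * (k:ℝ) + 1 := by push_cast; ring
      rw [this]
      have hne : (2 * (k:ℝ) + 1) ≠ 0 := by positivity
      field_simp
      ring
    rw [← h2]
    exact main1
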